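/- In ℂ² ⊗ ℂ² with orthonormal basis |0⟩, |1⟩ of ℂ² and |±⟩ = (|0⟩ ± |1⟩)/√2, let ψ = ((|0⟩ + |1⟩)/√2) ⊗ |0⟩ and φ = (|0⟩⊗|0⟩ + |1⟩⊗|1⟩)/√2, and let P₁ = |1⟩⟨1|, P₊ = |+⟩⟨+|, P₋ = |−⟩⟨−|. Then ⟨φ, ψ⟩ ≠ 0 and the weak values satisfy w(P₁ ⊗ 1 | ψ,φ) = 0, w(P₁ ⊗ P₊ | ψ,φ) = 1/2, and w(P₁ ⊗ P₋ | ψ,φ) = −1/2; in particular w(P₁ ⊗ 1) = w(P₁ ⊗ P₊) + w(P₁ ⊗ P₋), and the value −1/2 is an anomalous weak value lying outside the eigenvalue range [0,1] of the projector P₁ ⊗ P₋. -/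
import Mathlib


open scoped InnerProductSpace

/-- Two-qubit Hilbert space `ℂ² ⊗ ℂ²`, realized as `EuclideanSpace ℂ (Fin 2 × Fin 2)`
with product basis `|i⟩ ⊗ |j⟩ = b i j`. -/
noncomputable def b (i j : Fin 2) : EuclideanSpace ℂ (Fin 2 × Fin 2) :=
  EuclideanSpace.single (i, j) 1

/-- The rank-one orthogonal projection onto the span of a unit vector `v`. -/
noncomputable def rankOneProj (v : EuclideanSpace ℂ (Fin 2 × Fin 2)) :
    EuclideanSpace ℂ (Fin 2 × Fin 2) →L[ℂ] EuclideanSpace ℂ (Fin 2 × Fin 2) :=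
  (innerSL ℂ v).smulRight v

/-- Pre-selection `ψ = ((|0⟩ + |1⟩)/√2) ⊗ |0⟩`. -/
noncomputable def ψ : EuclideanSpace ℂ (Fin 2 × Fin 2) :=
  ((Real.sqrt 2 : ℂ))⁻¹ • (b 0 0 + b 1 0)

/-- Post-selection `φ = (|0⟩⊗|0⟩ + |1⟩⊗|1⟩)/√2`. -/
noncomputable def φ : EuclideanSpace ℂ (Fin 2 × Fin 2) :=
  ((Real.sqrt 2 : ℂ))⁻¹ • (b 0 0 + b 1 1)

/-- `P₁ ⊗ 1 = |1,0⟩⟨1,0| + |1,1⟩⟨1,1|`. -/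
noncomputable def P1I : EuclideanSpace ℂ (Fin 2 × Fin 2) →L[ℂ] EuclideanSpace ℂ (Fin 2 × Fin 2) :=
  rankOneProj (b 1 0) + rankOneProj (b 1 1)

/-- `P₁ ⊗ P₊`, the projection onto `|1⟩ ⊗ |+⟩ = (|1,0⟩ + |1,1⟩)/√2`. -/
noncomputable def P1plus : EuclideanSpace ℂ (Fin 2 × Fin 2) →L[ℂ] EuclideanSpace ℂ (Fin 2 × Fin 2) :=
  rankOneProj (((Real.sqrt 2 : ℂ))⁻¹ • (b 1 0 + b 1 1))

/-- `P₁ ⊗ P₋`, the projection onto `|1⟩ ⊗ |−⟩ = (|1,0⟩ − |1,1⟩)/√2`. -/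
noncomputable def P1minus : EuclideanSpace ℂ (Fin 2 × Fin 2) →L[ℂ] EuclideanSpace ℂ (Fin 2 × Fin 2) :=
  rankOneProj (((Real.sqrt 2 : ℂ))⁻¹ • (b 1 0 - b 1 1))

/-- The weak value `w(A) = Re(⟪φ, A ψ⟫ / ⟪φ, ψ⟫)`. -/
noncomputable def w
    (A : EuclideanSpace ℂ (Fin 2 × Fin 2) →L[ℂ] EuclideanSpace ℂ (Fin 2 × Fin 2)) : ℝ :=
  (⟪φ, A ψ⟫_ℂ / ⟪φ, ψ⟫_ℂ).re

lemma inner_bb (i j k l : Fin 2) :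
    ⟪b i j, b k l⟫_ℂ = if (k, l) = (i, j) then 1 else 0 := by
  simp only [b, EuclideanSpace.inner_single_left, EuclideanSpace.single_apply, map_one, one_mul,
    eq_comm]

lemma sq_inv : ((Real.sqrt 2 : ℂ))⁻¹ * ((Real.sqrt 2 : ℂ))⁻¹ = 1 / 2 := by
  have h : (Real.sqrt 2)⁻¹ * (Real.sqrt 2)⁻¹ = 1 / 2 := by
    rw [← mul_inv, Real.mul_self_sqrt (by norm_num : (0:ℝ) ≤ 2)]
    norm_num
  rw [← Complex.ofReal_inv, ← Complex.ofReal_mul, h]; norm_num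

lemma conj_sqrt_inv : (starRingEnd ℂ) ((Real.sqrt 2 : ℂ))⁻¹ = ((Real.sqrt 2 : ℂ))⁻¹ := by
  simp [Complex.conj_inv, Complex.conj_ofReal]

lemma inner_b_ψ (i j : Fin 2) :
    ⟪b i j, ψ⟫_ℂ = if j = 0 then ((Real.sqrt 2 : ℂ))⁻¹ else 0 := by
  fin_cases i <;> fin_cases j <;>
    simp only [ψ, inner_add_right, inner_smul_right, inner_bb] <;>
      norm_num [Prod.ext_iff]

lemma inner_φ_b (i j : Fin 2) :
    ⟪φ, b i j⟫_ℂ = if i = j then ((Real.sqrt 2 : ℂ))⁻¹ else 0 := by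
  fin_cases i <;> fin_cases j <;>
    simp only [φ, inner_add_left, inner_smul_left, inner_bb, conj_sqrt_inv] <;>
      norm_num [Prod.ext_iff]

lemma hφψ : ⟪φ, ψ⟫_ℂ = 1 / 2 := by
  simp only [ψ, inner_add_right, inner_smul_right, inner_φ_b]
  norm_num [sq_inv]

lemma rankOneProj_apply (v x : EuclideanSpace ℂ (Fin 2 × Fin 2)) :
    rankOneProj v x = ⟪v, x⟫_ℂ • v := rfl

/-- The weak-measurement quantum cheshire cat: `⟪φ, ψ⟫ ≠ 0`,
`w(P₁ ⊗ 1) = 0`, `w(P₁ ⊗ P₊) = 1/2`, `w(P₁ ⊗ P₋) = -1/2`; in particular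
`w(P₁ ⊗ 1) = w(P₁ ⊗ P₊) + w(P₁ ⊗ P₋)`, and `-1/2` is an anomalous weak value
lying outside the eigenvalue range `[0, 1]` of the projector `P₁ ⊗ P₋`. -/
theorem cheshire_cat_weak_values :
    ⟪φ, ψ⟫_ℂ ≠ 0 ∧
    w P1I = 0 ∧ w P1plus = 1 / 2 ∧ w P1minus = -(1 / 2) ∧
    w P1I = w P1plus + w P1minus ∧
    ¬ (0 ≤ w P1minus ∧ w P1minus ≤ 1) := by
  have h0 : ⟪φ, ψ⟫_ℂ ≠ 0 := by rw [hφψ]; norm_num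
  have h1 : w P1I = 0 := by
    simp only [w, P1I, ContinuousLinearMap.add_apply, rankOneProj_apply, inner_add_right,
      inner_smul_right, inner_b_ψ, inner_φ_b, hφψ]
    norm_num
  have h2 : w P1plus = 1 / 2 := by
    simp only [w, P1plus, rankOneProj_apply, inner_smul_left, inner_smul_right, inner_add_left,
      inner_add_right, inner_b_ψ, inner_φ_b, hφψ, conj_sqrt_inv]
    norm_num [sq_inv, Complex.div_re]
  have h3 : w P1minus = -(1 / 2) := by
    simp only [w, P1minus, rankOneProj_apply, inner_smul_left, inner_smul_right, inner_sub_left,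
      inner_sub_right, inner_b_ψ, inner_φ_b, hφψ, conj_sqrt_inv]
    norm_num [sq_inv, Complex.div_re]
  exact ⟨h0, h1, h2, h3, by rw [h1, h2, h3]; ring, by rw [h3]; norm_num⟩
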